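/- The Higman group H_4 is isomorphic to the amalgamated free product G_{123} *_{F_{13}} G_{341}: letting F₂ be the free group on two generators x₁, x₃, φ₁ : F₂ → G_{123} the homomorphism with φ₁(x₁) = a₁, φ₁(x₃) = a₃, and φ₂ : F₂ → G_{341} the homomorphism with φ₂(x₁) = a₁, φ₂(x₃) = a₃, the pushout of φ₁ and φ₂ is isomorphic to H_4 via an isomorphism sending the image of each generator a_p to the generator a_p of H_4. -/

import Mathlib

/-- The relators `a_p a_{p−1} a_p⁻¹ a_{p−1}⁻²` (for `p ∈ ℤ/qℤ`) of the Higman group. -/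
def higmanRels (q : ℕ) : Set (FreeGroup (ZMod q)) :=
  Set.range fun p : ZMod q =>
    FreeGroup.of p * FreeGroup.of (p - 1) * (FreeGroup.of p)⁻¹ *
      (FreeGroup.of (p - 1) * FreeGroup.of (p - 1))⁻¹

/-- The Higman group `H_q`, generated by `a_p` for `p ∈ ℤ/qℤ` subject to the relations
`a_p a_{p−1} a_p⁻¹ = a_{p−1}²`. -/
abbrev Higman (q : ℕ) : Type := PresentedGroup (higmanRels q)

/-- The generator `a_p` of the Higman group `H_q`. -/
def hgen (q : ℕ) (p : ZMod q) : Higman q := PresentedGroup.of p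

/-- The relators of the group G_{123} = ⟨a₁, a₂, a₃ ∣ a₂a₁a₂⁻¹ = a₁², a₃a₂a₃⁻¹ = a₂²⟩
(generator of index `i` standing for `a_{i+1}`). The group G_{341} = ⟨a₃, a₄, a₁ ∣
a₄a₃a₄⁻¹ = a₃², a₁a₄a₁⁻¹ = a₄²⟩ has the same presentation, with the generator of
index `0` standing for `a₃`, index `1` for `a₄` and index `2` for `a₁`. -/
def chainRels : Set (FreeGroup (Fin 3)) :=
  {FreeGroup.of 1 * FreeGroup.of 0 * (FreeGroup.of 1)⁻¹ * (FreeGroup.of 0 * FreeGroup.of 0)⁻¹,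
   FreeGroup.of 2 * FreeGroup.of 1 * (FreeGroup.of 2)⁻¹ * (FreeGroup.of 1 * FreeGroup.of 1)⁻¹}

/-- The group G_{123} (and also, under a different reading of the generators, G_{341}). -/
abbrev Gchain : Type := PresentedGroup chainRels

/-- The generators of G_{123} (resp. G_{341}). -/
def cgen (i : Fin 3) : Gchain := PresentedGroup.of i

/-- The free group F₂ on the two generators `x₁` (index 0) and `x₃` (index 1). -/
abbrev F2 : Type := FreeGroup (Fin 2)

/-- The homomorphism φ₁ : F₂ → G_{123}, x₁ ↦ a₁, x₃ ↦ a₃. -/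
def phi1 : F2 →* Gchain :=
  FreeGroup.lift fun i : Fin 2 => if i = 0 then cgen 0 else cgen 2

/-- The homomorphism φ₂ : F₂ → G_{341}, x₁ ↦ a₁, x₃ ↦ a₃ (in G_{341} the generator of
index `2` is `a₁` and the generator of index `0` is `a₃`). -/
def phi2 : F2 →* Gchain :=
  FreeGroup.lift fun i : Fin 2 => if i = 0 then cgen 2 else cgen 0

/-- The pair of homomorphisms (φ₁, φ₂) out of F₂, indexed by `Fin 2`. -/
def phiFam : ∀ _ : Fin 2, F2 →* Gchain := ![phi1, phi2]

-- auxiliary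
lemma mk_rel_eq_one {α : Type*} {rels : Set (FreeGroup α)} {r : FreeGroup α} (hr : r ∈ rels) :
    PresentedGroup.mk rels r = 1 :=
  (QuotientGroup.eq_one_iff r).2 (Subgroup.subset_normalClosure hr)

lemma higman_rel (q : ℕ) (p : ZMod q) :
    hgen q p * hgen q (p - 1) * (hgen q p)⁻¹ * (hgen q (p - 1) * hgen q (p - 1))⁻¹ = 1 := by
  have := mk_rel_eq_one (rels := higmanRels q) ⟨p, rfl⟩
  simpa [hgen, PresentedGroup.of, map_mul, map_inv] using this

lemma chain_rel1 : cgen 1 * cgen 0 * (cgen 1)⁻¹ * (cgen 0 * cgen 0)⁻¹ = 1 := by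
  have := mk_rel_eq_one (rels := chainRels) (Set.mem_insert _ _)
  simpa [cgen, PresentedGroup.of, map_mul, map_inv] using this

lemma chain_rel2 : cgen 2 * cgen 1 * (cgen 2)⁻¹ * (cgen 1 * cgen 1)⁻¹ = 1 := by
  have := mk_rel_eq_one (rels := chainRels) (Set.mem_insert_of_mem _ rfl)
  simpa [cgen, PresentedGroup.of, map_mul, map_inv] using this

def f0 : Gchain →* Higman 4 :=
  PresentedGroup.toGroup
    (f := fun i : Fin 3 => if i = 0 then hgen 4 1 else if i = 1 then hgen 4 2 else hgen 4 3)
    (by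
      intro r hr
      simp only [chainRels, Set.mem_insert_iff, Set.mem_singleton_iff] at hr
      rcases hr with rfl | rfl <;>
        simp only [map_mul, map_inv, FreeGroup.lift_apply_of] <;> norm_num
      · have h := higman_rel 4 2
        rwa [show (2 - 1 : ZMod 4) = 1 by decide] at h
      · have h := higman_rel 4 3
        rwa [show (3 - 1 : ZMod 4) = 2 by decide] at h)

def f1 : Gchain →* Higman 4 :=
  PresentedGroup.toGroup
    (f := fun i : Fin 3 => if i = 0 then hgen 4 3 else if i = 1 then hgen 4 0 else hgen 4 1)
    (by
      intro r hr
      simp only [chainRels, Set.mem_insert_iff, Set.mem_singleton_iff] at hr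
      rcases hr with rfl | rfl <;>
        simp only [map_mul, map_inv, FreeGroup.lift_apply_of] <;> norm_num
      · have h := higman_rel 4 0
        rwa [show (0 - 1 : ZMod 4) = 3 by decide] at h
      · have h := higman_rel 4 1
        rwa [show (1 - 1 : ZMod 4) = 0 by decide] at h)

def fFam : ∀ _ : Fin 2, Gchain →* Higman 4 := ![f0, f1]

lemma hf : ∀ i, (fFam i).comp (phiFam i) = f0.comp phi1 := by
  intro i
  fin_cases i
  · rfl
  · refine FreeGroup.ext_hom _ _ fun a => ?_
    fin_cases a <;>
      simp [fFam, phiFam, phi1, phi2, f0, f1, cgen, PresentedGroup.toGroup.of]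

def psiHom : Monoid.PushoutI phiFam →* Higman 4 :=
  Monoid.PushoutI.lift fFam (f0.comp phi1) hf

open Monoid.PushoutI in
lemma pA1 : Monoid.PushoutI.of (φ := phiFam) 0 (cgen 0) =
    Monoid.PushoutI.of (φ := phiFam) 1 (cgen 2) := by
  have h0 := Monoid.PushoutI.of_apply_eq_base (φ := phiFam) 0 (FreeGroup.of 0)
  have h1 := Monoid.PushoutI.of_apply_eq_base (φ := phiFam) 1 (FreeGroup.of 0)
  rw [show phiFam 0 (FreeGroup.of 0) = cgen 0 by simp [phiFam, phi1]] at h0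
  rw [show phiFam 1 (FreeGroup.of 0) = cgen 2 by simp [phiFam, phi2]] at h1
  rw [h0, h1]

lemma pA3 : Monoid.PushoutI.of (φ := phiFam) 0 (cgen 2) =
    Monoid.PushoutI.of (φ := phiFam) 1 (cgen 0) := by
  have h0 := Monoid.PushoutI.of_apply_eq_base (φ := phiFam) 0 (FreeGroup.of 1)
  have h1 := Monoid.PushoutI.of_apply_eq_base (φ := phiFam) 1 (FreeGroup.of 1)
  rw [show phiFam 0 (FreeGroup.of 1) = cgen 2 by simp [phiFam, phi1]] at h0
  rw [show phiFam 1 (FreeGroup.of 1) = cgen 0 by simp [phiFam, phi2]] at h1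
  rw [h0, h1]

lemma prel1 (i : Fin 2) :
    Monoid.PushoutI.of (φ := phiFam) i (cgen 1) * Monoid.PushoutI.of (φ := phiFam) i (cgen 0) *
      (Monoid.PushoutI.of (φ := phiFam) i (cgen 1))⁻¹ *
      (Monoid.PushoutI.of (φ := phiFam) i (cgen 0) *
        Monoid.PushoutI.of (φ := phiFam) i (cgen 0))⁻¹ = 1 := by
  have h : Monoid.PushoutI.of (φ := phiFam) i
      (cgen 1 * cgen 0 * (cgen 1)⁻¹ * (cgen 0 * cgen 0)⁻¹) = 1 := by
    rw [chain_rel1, map_one]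
  simpa [map_mul, map_inv] using h

lemma prel2 (i : Fin 2) :
    Monoid.PushoutI.of (φ := phiFam) i (cgen 2) * Monoid.PushoutI.of (φ := phiFam) i (cgen 1) *
      (Monoid.PushoutI.of (φ := phiFam) i (cgen 2))⁻¹ *
      (Monoid.PushoutI.of (φ := phiFam) i (cgen 1) *
        Monoid.PushoutI.of (φ := phiFam) i (cgen 1))⁻¹ = 1 := by
  have h : Monoid.PushoutI.of (φ := phiFam) i
      (cgen 2 * cgen 1 * (cgen 2)⁻¹ * (cgen 1 * cgen 1)⁻¹) = 1 := by
    rw [chain_rel2, map_one]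
  simpa [map_mul, map_inv] using h

def gfun : ZMod 4 → Monoid.PushoutI phiFam := fun p =>
  if p = 1 then Monoid.PushoutI.of (φ := phiFam) 0 (cgen 0)
  else if p = 2 then Monoid.PushoutI.of (φ := phiFam) 0 (cgen 1)
  else if p = 3 then Monoid.PushoutI.of (φ := phiFam) 0 (cgen 2)
  else Monoid.PushoutI.of (φ := phiFam) 1 (cgen 1)

def toH : Higman 4 →* Monoid.PushoutI phiFam :=
  PresentedGroup.toGroup (f := gfun)
    (by
      intro r hr
      obtain ⟨p, rfl⟩ := hr
      simp only [map_mul, map_inv, FreeGroup.lift_apply_of]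
      have hp : p = 0 ∨ p = 1 ∨ p = 2 ∨ p = 3 := by revert p; decide
      rcases hp with rfl | rfl | rfl | rfl
      · -- p = 0, p - 1 = 3
        rw [show ((0 : ZMod 4) - 1) = 3 by decide]
        simp only [gfun, if_neg (by decide : ¬((0:ZMod 4)=1)), if_neg (by decide : ¬((0:ZMod 4)=2)),
          if_neg (by decide : ¬((0:ZMod 4)=3)), if_neg (by decide : ¬((3:ZMod 4)=1)),
          if_neg (by decide : ¬((3:ZMod 4)=2)), if_pos (rfl : (3:ZMod 4)=3)]
        rw [pA3]
        exact prel1 1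
      · -- p = 1, p - 1 = 0
        rw [show ((1 : ZMod 4) - 1) = 0 by decide]
        simp only [gfun, if_pos (rfl : (1:ZMod 4)=1), if_neg (by decide : ¬((0:ZMod 4)=1)),
          if_neg (by decide : ¬((0:ZMod 4)=2)), if_neg (by decide : ¬((0:ZMod 4)=3))]
        rw [pA1]
        exact prel2 1
      · -- p = 2, p - 1 = 1
        rw [show ((2 : ZMod 4) - 1) = 1 by decide]
        simp only [gfun, if_pos (rfl : (1:ZMod 4)=1), if_neg (by decide : ¬((2:ZMod 4)=1)),
          if_pos (rfl : (2:ZMod 4)=2)]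
        exact prel1 0
      · -- p = 3, p - 1 = 2
        rw [show ((3 : ZMod 4) - 1) = 2 by decide]
        simp only [gfun, if_neg (by decide : ¬((3:ZMod 4)=1)), if_neg (by decide : ¬((3:ZMod 4)=2)),
          if_pos (rfl : (3:ZMod 4)=3), if_neg (by decide : ¬((2:ZMod 4)=1)),
          if_pos (rfl : (2:ZMod 4)=2)]
        exact prel2 0)

lemma comp1 : toH.comp psiHom = MonoidHom.id _ := by
  apply Monoid.PushoutI.hom_ext_nonempty
  intro i
  fin_cases i <;> refine PresentedGroup.ext fun x => ?_ <;> fin_cases x <;>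
    simp +decide [psiHom, toH, f0, f1, fFam, cgen, gfun, hgen, PresentedGroup.toGroup.of,
      Monoid.PushoutI.lift_of, pA1, pA3] <;>
    first
      | exact pA3
      | exact pA1

lemma comp2 : psiHom.comp toH = MonoidHom.id _ := by
  refine PresentedGroup.ext fun p => ?_
  have hp : p = 0 ∨ p = 1 ∨ p = 2 ∨ p = 3 := by revert p; decide
  rcases hp with rfl | rfl | rfl | rfl <;>
    simp +decide [psiHom, toH, f0, f1, fFam, cgen, gfun, hgen, PresentedGroup.toGroup.of,
      Monoid.PushoutI.lift_of]


/-- The Higman group H₄ is isomorphic to the amalgamated free product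
G_{123} *_{F_{13}} G_{341}, i.e. to the pushout of φ₁ : F₂ → G_{123} and φ₂ : F₂ → G_{341},
via an isomorphism sending the image of each generator `a_p` to the generator `a_p` of H₄. -/
theorem higman4_iso_pushout :
    ∃ ψ : Monoid.PushoutI phiFam ≃* Higman 4,
      ψ (Monoid.PushoutI.of (φ := phiFam) 0 (cgen 0)) = hgen 4 1 ∧
      ψ (Monoid.PushoutI.of (φ := phiFam) 0 (cgen 1)) = hgen 4 2 ∧
      ψ (Monoid.PushoutI.of (φ := phiFam) 0 (cgen 2)) = hgen 4 3 ∧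
      ψ (Monoid.PushoutI.of (φ := phiFam) 1 (cgen 0)) = hgen 4 3 ∧
      ψ (Monoid.PushoutI.of (φ := phiFam) 1 (cgen 1)) = hgen 4 0 ∧
      ψ (Monoid.PushoutI.of (φ := phiFam) 1 (cgen 2)) = hgen 4 1 := by
  refine ⟨MonoidHom.toMulEquiv psiHom toH comp1 comp2, ?_, ?_, ?_, ?_, ?_, ?_⟩ <;>
    simp [MonoidHom.toMulEquiv, psiHom, f0, f1, fFam, cgen, PresentedGroup.toGroup.of,
      Monoid.PushoutI.lift_of]
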